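/- For any vector r ∈ ℝ^{N−1} with entries r_2,…,r_N, the polynomial λ(τ) = ∑_{i=1}^N (A† r)_i L_i(τ) satisfies the first boundary identity of the Lobatto IIIB discontinuous collocation scheme: −λ'(−1) − λ(−1)/w_1 = −(1/w_1) ∑_{i=2}^{N} w_i r_i. -/

import Mathlib

open Polynomial

/-- `lagL τ i` is the `i`-th Lagrange basis polynomial (of degree `N - 1`)
for the nodes `τ 0, …, τ (N-1)`, satisfying `(lagL τ i).eval (τ j) = δᵢⱼ`. -/
noncomputable def lagL {N : ℕ} (τ : Fin N → ℝ) (i : Fin N) : ℝ[X] :=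
  Lagrange.basis Finset.univ τ i

/-- `lagLp τ` is the polynomial `L_p(x) = ∏ᵢ (x - τᵢ)`. -/
noncomputable def lagLp {N : ℕ} (τ : Fin N → ℝ) : ℝ[X] :=
  ∏ i, (X - C (τ i))

/-- The differentiation matrix `D`, with `D i j = L_j'(τ i)`. -/
noncomputable def matD {N : ℕ} (τ : Fin N → ℝ) : Matrix (Fin N) (Fin N) ℝ :=
  fun i j => (derivative (lagL τ j)).eval (τ i)

/-- The vector `D_p`, with `(D_p) i = L_p'(τ i)`. -/
noncomputable def vecDp {N : ℕ} (τ : Fin N → ℝ) : Fin N → ℝ :=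
  fun i => (derivative (lagLp τ)).eval (τ i)

/-- Columns `2, …, N+1` (in 1-based numbering) of the augmented differentiation
matrix `D̃ = [D  D_p]`: column `j` (0-based, `j < N - 1`) is column `j + 1` of `D`,
and the last column is `D_p`. -/
noncomputable def matDtil2 {N : ℕ} (τ : Fin N → ℝ) : Matrix (Fin N) (Fin N) ℝ :=
  fun i j => if h : (j : ℕ) + 1 < N then matD τ i ⟨(j : ℕ) + 1, h⟩ else vecDp τ i

/-- The quadrature rule with nodes `τ` and weights `w` integrates exactly all
polynomials of degree at most `2 * N - 3` over `[-1, 1]`. -/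
def IsQuadrature {N : ℕ} (τ : Fin N → ℝ) (w : Fin N → ℝ) : Prop :=
  ∀ p : ℝ[X], p.natDegree ≤ 2 * N - 3 →
    ∑ i, w i * p.eval (τ i) = ∫ t in (-1 : ℝ)..1, p.eval t

/-- The integration matrix `A` with rows indexed (0-based) by `i : Fin (N-1)`
corresponding to the node `τ (i+1)`: `A i j = ∫_{-1}^{τ (i+1)} L_j(t) dt`. -/
noncomputable def matA {N : ℕ} (τ : Fin N → ℝ) : Matrix (Fin (N - 1)) (Fin N) ℝ :=
  fun i j => ∫ t in (-1 : ℝ)..(τ ⟨(i : ℕ) + 1, by have := i.isLt; omega⟩), (lagL τ j).eval t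

/-- The row vector `A_p`, with `(A_p) j = (1/N) ∏_{k ≠ j} 1 / (τ j - τ k)`. -/
noncomputable def rowAp {N : ℕ} (τ : Fin N → ℝ) : Fin N → ℝ :=
  fun j => (1 / (N : ℝ)) * ∏ k ∈ Finset.univ.erase j, (τ j - τ k)⁻¹

/-- The matrix `Ã` obtained by stacking `A` on top of the row vector `A_p`. -/
noncomputable def matAtil {N : ℕ} (τ : Fin N → ℝ) : Matrix (Fin N) (Fin N) ℝ :=
  fun i j => if h : (i : ℕ) + 1 < N then matA τ ⟨(i : ℕ), by omega⟩ j else rowAp τ j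

/-- The adjoint integration matrix `A† = W⁻¹ Aᵀ W_{2:N}`, with columns indexed
(0-based) by `j : Fin (N-1)` corresponding to the node `τ (j+1)`. -/
noncomputable def matAdag {N : ℕ} (τ : Fin N → ℝ) (w : Fin N → ℝ) :
    Matrix (Fin N) (Fin (N - 1)) ℝ :=
  fun i j => (w i)⁻¹ * matA τ j i * w ⟨(j : ℕ) + 1, by have := j.isLt; omega⟩

/-- `polyM τ k` is the Lagrange basis polynomial (of degree `N - 3`) for the
interior nodes `τ 1, …, τ (N-2)`, satisfying `(polyM τ k).eval (τ m) = δₖₘ`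
for interior indices `m`. -/
noncomputable def polyM {N : ℕ} (τ : Fin N → ℝ) (k : Fin N) : ℝ[X] :=
  Lagrange.basis (Finset.univ.filter fun m : Fin N => 0 < (m : ℕ) ∧ (m : ℕ) < N - 1) τ k

/-- The polynomial `λ(x) = ∑ᵢ (A† r)ᵢ Lᵢ(x)`. -/
noncomputable def lamP {N : ℕ} (τ : Fin N → ℝ) (w : Fin N → ℝ) (r : Fin (N - 1) → ℝ) : ℝ[X] :=
  ∑ i, C ((matAdag τ w).mulVec r i) * lagL τ i

section helper
variable {N : ℕ} {τ : Fin N → ℝ} {w : Fin N → ℝ}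

lemma injOn_univ (hmono : StrictMono τ) : Set.InjOn τ ↑(Finset.univ : Finset (Fin N)) :=
  fun _ _ _ _ h => hmono.injective h

lemma eval_lagL (hmono : StrictMono τ) (i j : Fin N) :
    (lagL τ i).eval (τ j) = if i = j then 1 else 0 := by
  rcases eq_or_ne i j with rfl | h
  · simp [lagL, Lagrange.eval_basis_self (injOn_univ hmono) (Finset.mem_univ i)]
  · simp [lagL, Lagrange.eval_basis_of_ne h (Finset.mem_univ j), h]

lemma degree_lagL (hmono : StrictMono τ) (i : Fin N) :
    (lagL τ i).degree = ((N - 1 : ℕ) : WithBot ℕ) := by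
  have := Lagrange.degree_basis (injOn_univ hmono) (Finset.mem_univ i)
  simpa [lagL] using this

lemma natDegree_lagL (hmono : StrictMono τ) (i : Fin N) :
    (lagL τ i).natDegree = N - 1 := by
  have := Lagrange.natDegree_basis (injOn_univ hmono) (Finset.mem_univ i)
  simpa [lagL] using this

lemma integral_deriv_poly (p : ℝ[X]) (a b : ℝ) :
    ∫ t in a..b, (derivative p).eval t = p.eval b - p.eval a := by
  apply intervalIntegral.integral_eq_sub_of_hasDerivAt
  · exact fun x _ => p.hasDerivAt x
  · exact (Polynomial.continuous (derivative p)).intervalIntegrable a b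

def succIdx {N : ℕ} (j : Fin (N - 1)) : Fin N :=
  ⟨(j : ℕ) + 1, by have := j.isLt; omega⟩

lemma symm_id (hN : 3 ≤ N) (hmono : StrictMono τ)
    (z : Fin N) (hzv : (z : ℕ) = 0)
    (h0 : τ z = -1) (h1 : τ ⟨N - 1, by omega⟩ = 1)
    (hquad : IsQuadrature τ w) (i : Fin N) :
    w z * (derivative (lagL τ i)).eval (τ z)
      + w i * (derivative (lagL τ z)).eval (τ i)
      = -(if i = z then 1 else 0) := by
  set e : Fin N := ⟨N - 1, by omega⟩ with he
  have h1' : τ e = 1 := h1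
  have hze : z ≠ e := by
    intro h; apply_fun (Fin.val) at h; rw [hzv] at h; simp [he] at h; omega
  have hdeg : (derivative (lagL τ i * lagL τ z)).natDegree ≤ 2 * N - 3 := by
    have hi := natDegree_lagL hmono i
    have hzn := natDegree_lagL hmono z
    have h2 : (lagL τ i * lagL τ z).natDegree ≤ (N - 1) + (N - 1) := by
      calc (lagL τ i * lagL τ z).natDegree ≤ _ := natDegree_mul_le
        _ ≤ (N - 1) + (N - 1) := by rw [hi, hzn]
    calc (derivative (lagL τ i * lagL τ z)).natDegree
        ≤ (lagL τ i * lagL τ z).natDegree - 1 := natDegree_derivative_le _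
      _ ≤ 2 * N - 3 := by omega
  have hq := hquad _ hdeg
  have hsum : ∀ k, w k * (derivative (lagL τ i * lagL τ z)).eval (τ k)
      = (if z = k then w k * (derivative (lagL τ i)).eval (τ k) else 0)
      + (if i = k then w k * (derivative (lagL τ z)).eval (τ k) else 0) := by
    intro k
    rw [derivative_mul, eval_add, eval_mul, eval_mul, eval_lagL hmono, eval_lagL hmono]
    split_ifs <;> ring
  rw [Finset.sum_congr rfl (fun k _ => hsum k), Finset.sum_add_distrib,
    Finset.sum_ite_eq, Finset.sum_ite_eq, if_pos (Finset.mem_univ _),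
    if_pos (Finset.mem_univ _), integral_deriv_poly] at hq
  rw [← h0, ← h1', eval_mul, eval_mul, eval_lagL hmono, eval_lagL hmono,
    eval_lagL hmono, eval_lagL hmono] at hq
  rw [if_neg hze, if_pos rfl] at hq
  rcases eq_or_ne i z with rfl | h
  · rw [if_pos rfl] at hq ⊢
    split_ifs at hq <;> linarith
  · rw [if_neg h]
    rw [if_neg h] at hq
    split_ifs at hq <;> linarith

lemma degree_C_mul_lt (hmono : StrictMono τ) (hN : 3 ≤ N) (a : ℝ) (i : Fin N) :
    (C a * lagL τ i).degree < ((Finset.univ : Finset (Fin N)).card : WithBot ℕ) := by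
  rcases eq_or_ne a 0 with rfl | ha
  · simp only [map_zero, zero_mul, Polynomial.degree_zero, Finset.card_univ, Fintype.card_fin]
    exact_mod_cast WithBot.bot_lt_coe N
  · rw [Polynomial.degree_C_mul ha, degree_lagL hmono, Finset.card_univ, Fintype.card_fin]
    exact_mod_cast Nat.sub_lt (by omega) one_pos

lemma polyB (hN : 3 ≤ N) (hmono : StrictMono τ)
    (z : Fin N) (hzv : (z : ℕ) = 0)
    (h0 : τ z = -1) (h1 : τ ⟨N - 1, by omega⟩ = 1)
    (hw : ∀ i, 0 < w i) (hquad : IsQuadrature τ w) :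
    (∑ i, C ((w i)⁻¹ * (derivative (lagL τ i)).eval (τ z)) * lagL τ i)
        + C (((w z)⁻¹) ^ 2) * lagL τ z
      = C (-(w z)⁻¹) * derivative (lagL τ z) := by
  have hwne : ∀ i, w i ≠ 0 := fun i => (hw i).ne'
  apply Polynomial.eq_of_degrees_lt_of_eval_index_eq Finset.univ (injOn_univ hmono)
  · apply lt_of_le_of_lt (Polynomial.degree_add_le _ _)
    apply max_lt
    · apply lt_of_le_of_lt (Polynomial.degree_sum_le _ _)
      rw [Finset.sup_lt_iff]
      · exact fun i _ => degree_C_mul_lt hmono hN _ i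
      · rw [Finset.card_univ, Fintype.card_fin]
        exact_mod_cast WithBot.bot_lt_coe N
    · exact degree_C_mul_lt hmono hN _ z
  · rcases eq_or_ne (-(w z)⁻¹) 0 with h | h
    · rw [h]
      simp only [map_zero, zero_mul, Polynomial.degree_zero, Finset.card_univ, Fintype.card_fin]
      exact_mod_cast WithBot.bot_lt_coe N
    · rw [Polynomial.degree_C_mul h]
      apply lt_of_le_of_lt Polynomial.degree_derivative_le
      rw [degree_lagL hmono, Finset.card_univ, Fintype.card_fin]
      exact_mod_cast Nat.sub_lt (by omega) one_pos
  · intro m _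
    have hs := symm_id hN hmono z hzv h0 h1 hquad m
    have hwm := hwne m
    have hwz := hwne z
    rw [eval_add, eval_finset_sum, eval_mul, eval_C, eval_lagL hmono]
    simp only [eval_mul, eval_C, eval_lagL hmono, mul_ite, mul_one, mul_zero]
    rw [Finset.sum_ite_eq', if_pos (Finset.mem_univ m)]
    have hinvz : (w z)⁻¹ * w z = 1 := inv_mul_cancel₀ hwz
    have hinvm : (w m)⁻¹ * w m = 1 := inv_mul_cancel₀ hwm
    rcases eq_or_ne z m with rfl | h
    · rw [if_pos rfl]
      rw [if_pos rfl] at hs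
      linear_combination ((w z)⁻¹ ^ 2) * hs
        + (-(2 : ℝ) * (w z)⁻¹ * (derivative (lagL τ z)).eval (τ z)) * hinvz
    · rw [if_neg h, add_zero]
      rw [if_neg (fun hh : m = z => h hh.symm)] at hs
      linear_combination ((w m)⁻¹ * (w z)⁻¹) * hs
        + (-((w m)⁻¹ * (derivative (lagL τ m)).eval (τ z))) * hinvz
        + (-((w z)⁻¹ * (derivative (lagL τ z)).eval (τ m))) * hinvm

lemma keyK (hN : 3 ≤ N) (hmono : StrictMono τ)
    (z : Fin N) (hzv : (z : ℕ) = 0)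
    (h0 : τ z = -1) (h1 : τ ⟨N - 1, by omega⟩ = 1)
    (hw : ∀ i, 0 < w i) (hquad : IsQuadrature τ w) (j : Fin (N - 1)) :
    ∑ i, (w i)⁻¹ * (derivative (lagL τ i)).eval (τ z) * matA τ j i
      + ((w z)⁻¹) ^ 2 * matA τ j z = (w z)⁻¹ := by
  have hA : ∀ i, matA τ j i = ∫ t in (-1 : ℝ)..(τ (succIdx j)), (lagL τ i).eval t :=
    fun i => rfl
  have hint : ∀ (c : ℝ) (p : ℝ[X]),
      IntervalIntegrable (fun t => c * p.eval t) MeasureTheory.volume (-1 : ℝ) (τ (succIdx j)) :=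
    fun c p => (continuous_const.mul (Polynomial.continuous p)).intervalIntegrable _ _
  have step1 : ∑ i, (w i)⁻¹ * (derivative (lagL τ i)).eval (τ z) * matA τ j i
      = ∫ t in (-1 : ℝ)..(τ (succIdx j)),
          ∑ i, (w i)⁻¹ * (derivative (lagL τ i)).eval (τ z) * (lagL τ i).eval t := by
    rw [intervalIntegral.integral_finset_sum (fun i _ =>
      hint ((w i)⁻¹ * (derivative (lagL τ i)).eval (τ z)) (lagL τ i))]
    refine Finset.sum_congr rfl fun i _ => ?_
    rw [hA, ← intervalIntegral.integral_const_mul]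
  have step2 : ((w z)⁻¹) ^ 2 * matA τ j z
      = ∫ t in (-1 : ℝ)..(τ (succIdx j)), ((w z)⁻¹) ^ 2 * (lagL τ z).eval t := by
    rw [hA, ← intervalIntegral.integral_const_mul]
  rw [step1, step2, ← intervalIntegral.integral_add
    ((show Continuous (fun t => ∑ i, (w i)⁻¹ * (derivative (lagL τ i)).eval (τ z) * (lagL τ i).eval t) from
      continuous_finset_sum _ (fun i _ =>
      continuous_const.mul (Polynomial.continuous (lagL τ i)))).intervalIntegrable _ _)
    (hint _ _)]
  have hfun : ∀ t : ℝ,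
      (∑ i, (w i)⁻¹ * (derivative (lagL τ i)).eval (τ z) * (lagL τ i).eval t)
        + ((w z)⁻¹) ^ 2 * (lagL τ z).eval t
      = (derivative (C (-(w z)⁻¹) * lagL τ z)).eval t := by
    intro t
    rw [derivative_C_mul, ← polyB hN hmono z hzv h0 h1 hw hquad]
    simp [eval_finset_sum]
  rw [intervalIntegral.integral_congr (fun t _ => hfun t), integral_deriv_poly]
  have hne : succIdx j ≠ z := by
    intro h; apply_fun Fin.val at h; rw [hzv] at h; exact Nat.succ_ne_zero _ h
  rw [← h0, eval_mul, eval_mul, eval_C, eval_lagL hmono, eval_lagL hmono,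
    if_neg (fun hh : z = succIdx j => hne hh.symm), if_pos rfl]
  simp

end helper


/-- First boundary identity: `-λ'(-1) - λ(-1)/w₁ = -(1/w₁) ∑_{i=2}^{N} wᵢ rᵢ`. -/
theorem stmt13 (N : ℕ) (hN : 3 ≤ N) (τ : Fin N → ℝ) (hmono : StrictMono τ)
    (h0 : τ ⟨0, by omega⟩ = -1) (h1 : τ ⟨N - 1, by omega⟩ = 1) (w : Fin N → ℝ) (hw : ∀ i, 0 < w i) (hquad : IsQuadrature τ w) :
    ∀ r : Fin (N - 1) → ℝ,
      - (derivative (lamP τ w r)).eval (-1) - (lamP τ w r).eval (-1) / w ⟨0, by omega⟩ =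
        - (1 / w ⟨0, by omega⟩) *
            ∑ j : Fin (N - 1), w ⟨(j : ℕ) + 1, by have := j.isLt; omega⟩ * r j := by
  intro r
  have hNpos : 0 < N := by omega
  set z : Fin N := ⟨0, hNpos⟩ with hzdef
  have hzv : (z : ℕ) = 0 := rfl
  have h0' : τ z = -1 := h0
  have hwne : ∀ i, w i ≠ 0 := fun i => (hw i).ne'
  set c : Fin N → ℝ := (matAdag τ w).mulVec r with hc
  show - (derivative (lamP τ w r)).eval (-1) - (lamP τ w r).eval (-1) / w z =
      - (1 / w z) * ∑ j : Fin (N - 1), w (succIdx j) * r j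
  have hcdef : ∀ i, c i = ∑ j, (w i)⁻¹ * matA τ j i * w (succIdx j) * r j := by
    intro i
    show ∑ j, matAdag τ w i j * r j = _
    refine Finset.sum_congr rfl fun j _ => ?_
    show (w i)⁻¹ * matA τ j i * w (succIdx j) * r j = _
    rfl
  have heval : (lamP τ w r).eval (-1) = c z := by
    rw [← h0', lamP, eval_finset_sum]
    simp only [eval_mul, eval_C, eval_lagL hmono, mul_ite, mul_one, mul_zero]
    rw [Finset.sum_ite_eq', if_pos (Finset.mem_univ z)]
  have hder : (derivative (lamP τ w r)).eval (-1)
      = ∑ i, c i * (derivative (lagL τ i)).eval (τ z) := by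
    rw [← h0', lamP, derivative_sum]
    simp only [derivative_C_mul, eval_finset_sum, eval_mul, eval_C]
    rfl
  rw [heval, hder]
  have hsum1 : ∑ i, c i * (derivative (lagL τ i)).eval (τ z)
      = ∑ j, (∑ i, (w i)⁻¹ * (derivative (lagL τ i)).eval (τ z) * matA τ j i)
          * (w (succIdx j) * r j) := by
    simp only [hcdef, Finset.sum_mul]
    rw [Finset.sum_comm]
    refine Finset.sum_congr rfl fun j _ => ?_
    exact Finset.sum_congr rfl fun i _ => by ring
  have hsum2 : c z / w z = ∑ j, ((w z)⁻¹) ^ 2 * matA τ j z * (w (succIdx j) * r j) := by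
    rw [div_eq_mul_inv, hcdef, Finset.sum_mul]
    exact Finset.sum_congr rfl fun j _ => by ring
  rw [hsum1, hsum2, neg_mul, Finset.mul_sum, ← Finset.sum_neg_distrib,
    ← Finset.sum_neg_distrib, ← Finset.sum_sub_distrib]
  refine Finset.sum_congr rfl fun j _ => ?_
  have hK := keyK hN hmono z hzv h0' h1 hw hquad j
  have : (∑ i, (w i)⁻¹ * (derivative (lagL τ i)).eval (τ z) * matA τ j i)
      * (w (succIdx j) * r j) + ((w z)⁻¹) ^ 2 * matA τ j z * (w (succIdx j) * r j)
      = (w z)⁻¹ * (w (succIdx j) * r j) := by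
    rw [← add_mul, hK]
  rw [one_div]
  linarith [this]
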